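/- Suppose each A_i is symmetric, the measurement operator satisfies (2r, δ)-RIP with 0 ≤ δ < 1, X* = U*·U*ᵀ for some U* ∈ ℝ^{n×r}, n ≥ 2, σ_w ≥ 0, the noise vector w ∈ ℝ^m satisfies |Σ_{i=1}^m w_i·⟨A_i, M⟩| ≤ 2·σ_w·√(log n)·(Σ_{i=1}^m ⟨A_i, M⟩²)^{1/2} for every M ∈ ℝ^{n×n} with rank(M) ≤ 2r, and y_i = ⟨A_i, X*⟩ + w_i for every i. Let U ∈ ℝ^{n×r} be a local minimum of f. Then for every r×r orthogonal matrix R, writing Δ := U − U*R and e_j for the standard basis of ℝ^r: ((1−δ)/(2(1+δ)))·‖U·Uᵀ − X*‖_F² ≤ Σ_{j=1}^r ‖U·e_j·e_jᵀ·Δᵀ‖_F² + (1/20)·‖U·Uᵀ − X*‖_F² + 10·log(n)·σ_w²/(m·(1+δ)). -/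

import Mathlib

open Matrix MeasureTheory BigOperators
open Filter Topology

/-- Matrix inner product `⟨A, X⟩ = trace(Aᵀ X)`. -/
noncomputable def mip {n : ℕ} (A X : Matrix (Fin n) (Fin n) ℝ) : ℝ :=
  (Aᵀ * X).trace

/-- Frobenius norm of a real matrix. -/
noncomputable def frob {n₁ n₂ : ℕ} (M : Matrix (Fin n₁) (Fin n₂) ℝ) : ℝ :=
  Real.sqrt (∑ i, ∑ j, (M i j) ^ 2)

/-- `(k, δ)`-restricted isometry property of the measurement operator `A`. -/
def RIP {n m : ℕ} (A : Fin m → Matrix (Fin n) (Fin n) ℝ) (k : ℕ) (δ : ℝ) : Prop :=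
  ∀ X : Matrix (Fin n) (Fin n) ℝ, X.rank ≤ k →
    (1 - δ) * frob X ^ 2 ≤ (1 / (m : ℝ)) * ∑ i, mip (A i) X ^ 2 ∧
    (1 / (m : ℝ)) * ∑ i, mip (A i) X ^ 2 ≤ (1 + δ) * frob X ^ 2

/-- Objective `f(U) = ∑ i, (⟨A i, U Uᵀ⟩ - y i)²`. -/
noncomputable def fobj {n m r : ℕ} (A : Fin m → Matrix (Fin n) (Fin n) ℝ) (y : Fin m → ℝ)
    (U : Matrix (Fin n) (Fin r) ℝ) : ℝ :=
  ∑ i, (mip (A i) (U * Uᵀ) - y i) ^ 2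

lemma mip_add {n : ℕ} (A X Y : Matrix (Fin n) (Fin n) ℝ) :
    mip A (X + Y) = mip A X + mip A Y := by
  simp [mip, Matrix.mul_add]

lemma mip_sub {n : ℕ} (A X Y : Matrix (Fin n) (Fin n) ℝ) :
    mip A (X - Y) = mip A X - mip A Y := by
  simp [mip, Matrix.mul_sub]

lemma mip_smul {n : ℕ} (A : Matrix (Fin n) (Fin n) ℝ) (t : ℝ) (X : Matrix (Fin n) (Fin n) ℝ) :
    mip A (t • X) = t * mip A X := by
  simp [mip, Matrix.mul_smul]

lemma mip_sum {n r : ℕ} (A : Matrix (Fin n) (Fin n) ℝ) (X : Fin r → Matrix (Fin n) (Fin n) ℝ) :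
    mip A (∑ j, X j) = ∑ j, mip A (X j) := by
  simp [mip, Matrix.mul_sum]

lemma quartic_localmin (a0 a1 a2 a3 a4 : ℝ)
    (h : IsLocalMin (fun t : ℝ => a0 + a1*t + a2*t^2 + a3*t^3 + a4*t^4) 0) :
    a1 = 0 ∧ 0 ≤ a2 := by
  have hd : HasDerivAt (fun t : ℝ => a0 + a1*t + a2*t^2 + a3*t^3 + a4*t^4)
      (0 + a1*1 + a2*(2*(0:ℝ)^1) + a3*(3*(0:ℝ)^2) + a4*(4*(0:ℝ)^3)) 0 := by
    exact ((((hasDerivAt_const (0:ℝ) a0).add ((hasDerivAt_id (0:ℝ)).const_mul a1)).add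
      (((hasDerivAt_pow 2 (0:ℝ))).const_mul a2)).add
      (((hasDerivAt_pow 3 (0:ℝ))).const_mul a3)).add
      (((hasDerivAt_pow 4 (0:ℝ))).const_mul a4)
  norm_num at hd
  have h1 : a1 = 0 := h.hasDerivAt_eq_zero hd
  refine ⟨h1, ?_⟩
  by_contra hc
  push_neg at hc
  have hcont : ContinuousAt (fun t : ℝ => a2 + a3*t + a4*t^2) 0 := by fun_prop
  have hev : ∀ᶠ t in 𝓝 (0:ℝ), a2 + a3*t + a4*t^2 < 0 := by
    have := hcont.eventually_lt continuousAt_const (by simpa using hc)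
    simpa using this
  have hmin : ∀ᶠ t in 𝓝 (0:ℝ), (fun t : ℝ => a0 + a1*t + a2*t^2 + a3*t^3 + a4*t^4) 0 ≤
      (fun t : ℝ => a0 + a1*t + a2*t^2 + a3*t^3 + a4*t^4) t := h
  have hne : ∀ᶠ t in 𝓝[≠] (0:ℝ),
      ((fun t : ℝ => a0 + a1*t + a2*t^2 + a3*t^3 + a4*t^4) 0 ≤
        (fun t : ℝ => a0 + a1*t + a2*t^2 + a3*t^3 + a4*t^4) t) ∧ a2 + a3*t + a4*t^2 < 0 :=
    (hmin.and hev).filter_mono nhdsWithin_le_nhds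
  obtain ⟨t, ⟨hle, hlt⟩, ht0⟩ := (hne.and eventually_mem_nhdsWithin).exists
  have ht2 : (0:ℝ) < t^2 := pow_two_pos_of_ne_zero ht0
  simp only [h1] at hle
  norm_num at hle
  nlinarith [mul_neg_of_pos_of_neg ht2 hlt]

lemma sum_quartic {m : ℕ} (p b c : Fin m → ℝ) (t : ℝ) :
    ∑ i, (p i + b i * t + c i * t^2)^2 =
      (∑ i, p i^2) + (∑ i, 2*p i*b i)*t + (∑ i, (b i^2 + 2*p i*c i))*t^2
      + (∑ i, 2*b i*c i)*t^3 + (∑ i, c i^2)*t^4 := by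
  simp only [Finset.sum_mul]
  rw [← Finset.sum_add_distrib, ← Finset.sum_add_distrib, ← Finset.sum_add_distrib,
    ← Finset.sum_add_distrib]
  exact Finset.sum_congr rfl fun i _ => by ring

lemma second_order_conditions {n m r : ℕ} (A : Fin m → Matrix (Fin n) (Fin n) ℝ)
    (y : Fin m → ℝ) (U : Matrix (Fin n) (Fin r) ℝ) (hU : IsLocalMin (fobj A y) U)
    (Z : Matrix (Fin n) (Fin r) ℝ) :
    (∑ i, (mip (A i) (U * Uᵀ) - y i) * mip (A i) (Z * Uᵀ + U * Zᵀ) = 0) ∧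
    (0 ≤ ∑ i, (mip (A i) (Z * Uᵀ + U * Zᵀ)^2 +
        2 * (mip (A i) (U * Uᵀ) - y i) * mip (A i) (Z * Zᵀ))) := by
  have hexp : ∀ t : ℝ, (U + t • Z) * (U + t • Z)ᵀ =
      U * Uᵀ + t • (Z * Uᵀ + U * Zᵀ) + (t^2) • (Z * Zᵀ) := by
    intro t
    rw [transpose_add, transpose_smul, Matrix.add_mul, Matrix.mul_add, Matrix.mul_add,
      Matrix.smul_mul, Matrix.smul_mul, Matrix.mul_smul, Matrix.mul_smul, smul_smul,
      ← pow_two, smul_add]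
    abel
  have hfe : ∀ t : ℝ, fobj A y (U + t • Z) =
      (∑ i, (mip (A i) (U * Uᵀ) - y i)^2)
      + (∑ i, 2*(mip (A i) (U * Uᵀ) - y i)*(mip (A i) (Z * Uᵀ + U * Zᵀ)))*t
      + (∑ i, ((mip (A i) (Z * Uᵀ + U * Zᵀ))^2
          + 2*(mip (A i) (U * Uᵀ) - y i)*(mip (A i) (Z * Zᵀ))))*t^2
      + (∑ i, 2*(mip (A i) (Z * Uᵀ + U * Zᵀ))*(mip (A i) (Z * Zᵀ)))*t^3
      + (∑ i, (mip (A i) (Z * Zᵀ))^2)*t^4 := by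
    intro t
    unfold fobj
    simp only [hexp t, mip_add, mip_smul]
    rw [Finset.sum_congr rfl (fun i _ => show
      (mip (A i) (U * Uᵀ) + t * (mip (A i) (Z * Uᵀ) + mip (A i) (U * Zᵀ))
          + t^2 * mip (A i) (Z * Zᵀ) - y i)^2
      = ((fun i => mip (A i) (U * Uᵀ) - y i) i
          + (fun i => mip (A i) (Z * Uᵀ) + mip (A i) (U * Zᵀ)) i * t
          + (fun i => mip (A i) (Z * Zᵀ)) i * t^2)^2 from by simp only []; ring),
      sum_quartic]
  have hT : Filter.Tendsto (fun t : ℝ => U + t • Z) (𝓝 0) (𝓝 U) := by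
    have hc : Continuous fun t : ℝ => U + t • Z :=
      continuous_const.add (continuous_id.smul continuous_const)
    exact hc.tendsto' 0 U (by simp)
  have hline : IsLocalMin (fun t : ℝ => fobj A y (U + t • Z)) 0 := by
    have h0 : fobj A y (U + (0:ℝ) • Z) = fobj A y U := by simp
    have := hT.eventually hU
    unfold IsLocalMin IsMinFilter
    simpa [h0] using this
  have hline' : IsLocalMin (fun t : ℝ =>
      (∑ i, (mip (A i) (U * Uᵀ) - y i)^2)
      + (∑ i, 2*(mip (A i) (U * Uᵀ) - y i)*(mip (A i) (Z * Uᵀ + U * Zᵀ)))*t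
      + (∑ i, ((mip (A i) (Z * Uᵀ + U * Zᵀ))^2
          + 2*(mip (A i) (U * Uᵀ) - y i)*(mip (A i) (Z * Zᵀ))))*t^2
      + (∑ i, 2*(mip (A i) (Z * Uᵀ + U * Zᵀ))*(mip (A i) (Z * Zᵀ)))*t^3
      + (∑ i, (mip (A i) (Z * Zᵀ))^2)*t^4) 0 := by
    have : (fun t : ℝ => fobj A y (U + t • Z)) = _ := funext hfe
    rwa [this] at hline
  obtain ⟨h1, h2⟩ := quartic_localmin _ _ _ _ _ hline'
  constructor
  · have : (2:ℝ) * ∑ i, (mip (A i) (U * Uᵀ) - y i) * mip (A i) (Z * Uᵀ + U * Zᵀ) = 0 := by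
      rw [Finset.mul_sum]
      rw [← h1]
      exact Finset.sum_congr rfl fun i _ => by ring
    linarith
  · exact h2

-- extra aux lemmas to append
lemma mip_transpose {n : ℕ} (A X : Matrix (Fin n) (Fin n) ℝ) (hA : Aᵀ = A) :
    mip A Xᵀ = mip A X := by
  unfold mip
  calc (Aᵀ * Xᵀ).trace = ((X * A)ᵀ).trace := by rw [Matrix.transpose_mul]
    _ = (X * A).trace := Matrix.trace_transpose _
    _ = (A * X).trace := Matrix.trace_mul_comm _ _
    _ = (Aᵀ * X).trace := by rw [hA]

lemma frob_sq {n₁ n₂ : ℕ} (M : Matrix (Fin n₁) (Fin n₂) ℝ) :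
    frob M ^ 2 = ∑ i, ∑ j, (M i j) ^ 2 :=
  Real.sq_sqrt (by positivity)

lemma frob_nonneg {n₁ n₂ : ℕ} (M : Matrix (Fin n₁) (Fin n₂) ℝ) : 0 ≤ frob M :=
  Real.sqrt_nonneg _

lemma rank_sub_le' {n : ℕ} (A B : Matrix (Fin n) (Fin n) ℝ) :
    (A - B).rank ≤ A.rank + B.rank := by
  have h : LinearMap.range (A - B).mulVecLin ≤
      LinearMap.range A.mulVecLin ⊔ LinearMap.range B.mulVecLin := by
    rintro x ⟨v, rfl⟩
    have : (A - B).mulVecLin v = A.mulVecLin v + (-(B.mulVecLin v)) := by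
      simp [Matrix.sub_mulVec, sub_eq_add_neg, Matrix.neg_mulVec]
    rw [this]
    exact Submodule.add_mem_sup ⟨v, rfl⟩ (Submodule.neg_mem _ ⟨v, rfl⟩)
  calc (A - B).rank = Module.finrank ℝ (LinearMap.range (A - B).mulVecLin) := rfl
    _ ≤ Module.finrank ℝ
        ((LinearMap.range A.mulVecLin) ⊔ (LinearMap.range B.mulVecLin) : Submodule ℝ _) :=
        Submodule.finrank_mono h
    _ ≤ _ := Submodule.finrank_add_le_finrank_add_finrank _ _

lemma sum_stdBasis {r : ℕ} : ∑ j : Fin r, Matrix.single j j (1 : ℝ) = 1 := by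
  ext a b
  rw [Matrix.sum_apply]
  by_cases h : a = b
  · subst h
    simp [Matrix.single, Matrix.one_apply]
  · rw [Matrix.one_apply_ne h, Finset.sum_eq_zero]
    intro x _
    simp only [Matrix.single, Matrix.of_apply, ite_eq_right_iff, and_imp]
    rintro rfl rfl
    exact absurd rfl h

lemma stdBasis_transpose {r : ℕ} (j : Fin r) :
    (Matrix.single j j (1 : ℝ))ᵀ = Matrix.single j j (1 : ℝ) := by
  ext a b
  simp [Matrix.single, Matrix.transpose_apply, and_comm]

set_option maxHeartbeats 1000000

/-- Noisy second-order optimality condition at a local minimum. -/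
theorem noisy_second_order_condition {n m r : ℕ} (hn : 2 ≤ n) (hm : 0 < m) (hr : 0 < r)
    (A : Fin m → Matrix (Fin n) (Fin n) ℝ) (hsym : ∀ i, (A i)ᵀ = A i)
    (δ : ℝ) (hδ0 : 0 ≤ δ) (hδ1 : δ < 1) (hRIP : RIP A (2 * r) δ)
    (Ustar : Matrix (Fin n) (Fin r) ℝ) (Xstar : Matrix (Fin n) (Fin n) ℝ)
    (hX : Xstar = Ustar * Ustarᵀ)
    (σw : ℝ) (hσw : 0 ≤ σw) (w : Fin m → ℝ)
    (hw : ∀ M : Matrix (Fin n) (Fin n) ℝ, M.rank ≤ 2 * r →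
      |∑ i, w i * mip (A i) M| ≤
        2 * σw * Real.sqrt (Real.log n) * Real.sqrt (∑ i, mip (A i) M ^ 2))
    (y : Fin m → ℝ) (hy : ∀ i, y i = mip (A i) Xstar + w i)
    (U : Matrix (Fin n) (Fin r) ℝ) (hU : IsLocalMin (fobj A y) U)
    (R : Matrix (Fin r) (Fin r) ℝ) (hR : Rᵀ * R = 1) :
    ((1 - δ) / (2 * (1 + δ))) * frob (U * Uᵀ - Xstar) ^ 2 ≤
      (∑ j : Fin r,
        frob (U * Matrix.single j j (1 : ℝ) * (U - Ustar * R)ᵀ) ^ 2) +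
      (1 / 20) * frob (U * Uᵀ - Xstar) ^ 2 +
      10 * Real.log n * σw ^ 2 / (m * (1 + δ)) := by
  -- notation
  set Δ : Matrix (Fin n) (Fin r) ℝ := U - Ustar * R with hΔdef
  set E : Matrix (Fin n) (Fin n) ℝ := U * Uᵀ - Xstar with hEdef
  set S : Fin r → Matrix (Fin r) (Fin r) ℝ := fun j => Matrix.single j j (1:ℝ) with hSdef
  -- basic positivity
  have hmpos : (0:ℝ) < m := by exact_mod_cast hm
  have hm0 : (m:ℝ) ≠ 0 := ne_of_gt hmpos
  have hdpos : (0:ℝ) < 1 + δ := by linarith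
  have hDpos : (0:ℝ) < (m:ℝ) * (1 + δ) := by positivity
  have hL : 0 ≤ Real.log n := Real.log_nonneg (by exact_mod_cast (by omega : 1 ≤ n))
  -- orthogonality
  have hRR : R * Rᵀ = 1 := mul_eq_one_comm.mp hR
  have hUR : (Ustar * R) * (Ustar * R)ᵀ = Xstar := by
    rw [Matrix.transpose_mul, hX, Matrix.mul_assoc, ← Matrix.mul_assoc R Rᵀ Ustarᵀ, hRR,
      Matrix.one_mul]
  -- key matrix identity
  have hΔE : Δ * Δᵀ = (Δ * Uᵀ + U * Δᵀ) - E := by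
    rw [hΔdef, hEdef]
    simp only [Matrix.transpose_sub, Matrix.sub_mul, Matrix.mul_sub]
    rw [Matrix.transpose_mul] at hUR ⊢
    rw [hUR]
    abel
  -- ranks
  have hrankE : E.rank ≤ 2 * r := by
    calc E.rank ≤ (U * Uᵀ).rank + Xstar.rank := rank_sub_le' _ _
      _ ≤ r + r := by
          gcongr
          · exact (Matrix.rank_mul_le_left U Uᵀ).trans (Matrix.rank_le_width U)
          · rw [hX]
            exact (Matrix.rank_mul_le_left Ustar Ustarᵀ).trans (Matrix.rank_le_width Ustar)
      _ = 2 * r := by ring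
  have hrankM : ∀ j, (U * S j * Δᵀ).rank ≤ 2 * r := by
    intro j
    calc (U * S j * Δᵀ).rank ≤ (U * S j).rank := Matrix.rank_mul_le_left _ _
      _ ≤ r := Matrix.rank_le_width _
      _ ≤ 2 * r := by omega
  -- first-order condition along Δ
  have F1 : ∑ i, (mip (A i) (U * Uᵀ) - y i) * mip (A i) (Δ * Uᵀ + U * Δᵀ) = 0 :=
    (second_order_conditions A y U hU Δ).1
  -- second-order conditions along the columns of Δ
  have hSS : ∀ j, S j * S j = S j := by
    intro j
    rw [hSdef]
    simpa using Matrix.single_mul_single_same (i := j) (j := j) (c := (1:ℝ)) j 1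
  have hSt : ∀ j, (S j)ᵀ = S j := fun j => stdBasis_transpose j
  have hZU : ∀ j, (Δ * S j) * Uᵀ + U * (Δ * S j)ᵀ = (U * S j * Δᵀ)ᵀ + U * S j * Δᵀ := by
    intro j
    congr 1
    · rw [Matrix.transpose_mul, Matrix.transpose_mul, Matrix.transpose_transpose, hSt j,
        Matrix.mul_assoc]
    · rw [Matrix.transpose_mul, hSt j, ← Matrix.mul_assoc]
  have hZZ : ∀ j, (Δ * S j) * (Δ * S j)ᵀ = Δ * S j * Δᵀ := by
    intro j
    rw [Matrix.transpose_mul, hSt j, ← Matrix.mul_assoc, Matrix.mul_assoc Δ (S j) (S j), hSS j,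
      Matrix.mul_assoc]
  have hS2 : ∀ j, 0 ≤ 4 * (∑ i, mip (A i) (U * S j * Δᵀ) ^ 2)
      + 2 * (∑ i, (mip (A i) (U * Uᵀ) - y i) * mip (A i) (Δ * S j * Δᵀ)) := by
    intro j
    have h := (second_order_conditions A y U hU (Δ * S j)).2
    calc (0:ℝ) ≤ _ := h
      _ = ∑ i, (4 * mip (A i) (U * S j * Δᵀ) ^ 2
          + 2 * (mip (A i) (U * Uᵀ) - y i) * mip (A i) (Δ * S j * Δᵀ)) := by
          refine Finset.sum_congr rfl fun i _ => ?_
          rw [hZU j, hZZ j, mip_add, mip_transpose _ _ (hsym i)]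
          ring
      _ = _ := by
          rw [Finset.sum_add_distrib, ← Finset.mul_sum]
          congr 1
          rw [Finset.mul_sum]
          exact Finset.sum_congr rfl fun i _ => by ring
  -- sum the second-order conditions over j
  have hsumZZ : ∑ j, Δ * S j * Δᵀ = Δ * Δᵀ := by
    rw [← Matrix.sum_mul, ← Matrix.mul_sum, hSdef]
    rw [sum_stdBasis, Matrix.mul_one]
  have hbig : 0 ≤ 4 * (∑ j, ∑ i, mip (A i) (U * S j * Δᵀ) ^ 2)
      + 2 * (∑ i, (mip (A i) (U * Uᵀ) - y i) * mip (A i) (Δ * Δᵀ)) := by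
    have h0 : (0:ℝ) ≤ ∑ j, (4 * (∑ i, mip (A i) (U * S j * Δᵀ) ^ 2)
        + 2 * (∑ i, (mip (A i) (U * Uᵀ) - y i) * mip (A i) (Δ * S j * Δᵀ))) :=
      Finset.sum_nonneg fun j _ => hS2 j
    have h1 : ∑ i, (mip (A i) (U * Uᵀ) - y i) * mip (A i) (Δ * Δᵀ)
        = ∑ j, ∑ i, (mip (A i) (U * Uᵀ) - y i) * mip (A i) (Δ * S j * Δᵀ) := by
      rw [Finset.sum_comm]
      refine Finset.sum_congr rfl fun i _ => ?_
      rw [← Finset.mul_sum, ← mip_sum, hsumZZ]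
    rw [h1]
    rw [Finset.sum_add_distrib, ← Finset.mul_sum, ← Finset.mul_sum] at h0
    exact h0
  -- residual decomposition
  have hρ : ∀ i, mip (A i) (U * Uᵀ) - y i = mip (A i) E - w i := by
    intro i
    rw [hy i, hEdef, mip_sub]
    ring
  -- master inequality
  have hmaster : ∑ i, mip (A i) E ^ 2 ≤
      2 * (∑ j, ∑ i, mip (A i) (U * S j * Δᵀ) ^ 2) + ∑ i, w i * mip (A i) E := by
    have h1 : ∑ i, (mip (A i) (U * Uᵀ) - y i) * mip (A i) (Δ * Δᵀ)
        = - ∑ i, (mip (A i) (U * Uᵀ) - y i) * mip (A i) E := by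
      calc ∑ i, (mip (A i) (U * Uᵀ) - y i) * mip (A i) (Δ * Δᵀ)
          = ∑ i, ((mip (A i) (U * Uᵀ) - y i) * mip (A i) (Δ * Uᵀ + U * Δᵀ)
            - (mip (A i) (U * Uᵀ) - y i) * mip (A i) E) := by
            refine Finset.sum_congr rfl fun i _ => ?_
            rw [hΔE, mip_sub]
            ring
        _ = _ := by
            rw [Finset.sum_sub_distrib, F1]
            ring
    have h2 : ∑ i, (mip (A i) (U * Uᵀ) - y i) * mip (A i) E
        = ∑ i, mip (A i) E ^ 2 - ∑ i, w i * mip (A i) E := by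
      rw [← Finset.sum_sub_distrib]
      refine Finset.sum_congr rfl fun i _ => ?_
      rw [hρ i]
      ring
    rw [h1, h2] at hbig
    linarith
  -- RIP bounds
  have hEl : (m:ℝ) * ((1 - δ) * frob E ^ 2) ≤ ∑ i, mip (A i) E ^ 2 := by
    have := (hRIP E hrankE).1
    calc (m:ℝ) * ((1 - δ) * frob E ^ 2) ≤ (m:ℝ) * ((1 / m) * ∑ i, mip (A i) E ^ 2) :=
      mul_le_mul_of_nonneg_left this hmpos.le
      _ = ∑ i, mip (A i) E ^ 2 := by field_simp
  have hEu : ∑ i, mip (A i) E ^ 2 ≤ (m:ℝ) * ((1 + δ) * frob E ^ 2) := by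
    have := (hRIP E hrankE).2
    calc ∑ i, mip (A i) E ^ 2 = (m:ℝ) * ((1 / m) * ∑ i, mip (A i) E ^ 2) := by field_simp
      _ ≤ (m:ℝ) * ((1 + δ) * frob E ^ 2) := mul_le_mul_of_nonneg_left this hmpos.le
  have hMu : ∀ j, ∑ i, mip (A i) (U * S j * Δᵀ) ^ 2
      ≤ (m:ℝ) * ((1 + δ) * frob (U * S j * Δᵀ) ^ 2) := by
    intro j
    have := (hRIP _ (hrankM j)).2
    calc ∑ i, mip (A i) (U * S j * Δᵀ) ^ 2
        = (m:ℝ) * ((1 / m) * ∑ i, mip (A i) (U * S j * Δᵀ) ^ 2) := by field_simp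
      _ ≤ _ := mul_le_mul_of_nonneg_left this hmpos.le
  -- noise bound
  have hnoise : ∑ i, w i * mip (A i) E ≤
      2 * σw * Real.sqrt (Real.log n) * (Real.sqrt ((m:ℝ) * (1 + δ)) * frob E) := by
    have h1 := hw E hrankE
    have h2 : Real.sqrt (∑ i, mip (A i) E ^ 2) ≤ Real.sqrt ((m:ℝ) * (1 + δ)) * frob E := by
      have hb : ∑ i, mip (A i) E ^ 2 ≤ (Real.sqrt ((m:ℝ) * (1 + δ)) * frob E) ^ 2 := by
        rw [mul_pow, Real.sq_sqrt hDpos.le]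
        calc ∑ i, mip (A i) E ^ 2 ≤ (m:ℝ) * ((1 + δ) * frob E ^ 2) := hEu
          _ = (m:ℝ) * (1 + δ) * frob E ^ 2 := by ring
      calc Real.sqrt (∑ i, mip (A i) E ^ 2)
          ≤ Real.sqrt ((Real.sqrt ((m:ℝ) * (1 + δ)) * frob E) ^ 2) := Real.sqrt_le_sqrt hb
        _ = Real.sqrt ((m:ℝ) * (1 + δ)) * frob E := Real.sqrt_sq (mul_nonneg (Real.sqrt_nonneg _) (frob_nonneg _))
    calc ∑ i, w i * mip (A i) E ≤ |∑ i, w i * mip (A i) E| := le_abs_self _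
      _ ≤ 2 * σw * Real.sqrt (Real.log n) * Real.sqrt (∑ i, mip (A i) E ^ 2) := h1
      _ ≤ 2 * σw * Real.sqrt (Real.log n) * (Real.sqrt ((m:ℝ) * (1 + δ)) * frob E) := by
          exact mul_le_mul_of_nonneg_left h2
            (mul_nonneg (by linarith : (0:ℝ) ≤ 2 * σw) (Real.sqrt_nonneg _))
  -- put together: the quantitative inequality
  have hSFnn : 0 ≤ ∑ j, frob (U * S j * Δᵀ) ^ 2 :=
    Finset.sum_nonneg fun j _ => by positivity
  have hG : (m:ℝ) * (1 - δ) * frob E ^ 2 ≤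
      2 * ((m:ℝ) * (1 + δ)) * (∑ j, frob (U * S j * Δᵀ) ^ 2)
      + 2 * σw * Real.sqrt (Real.log n) * (Real.sqrt ((m:ℝ) * (1 + δ)) * frob E) := by
    have hT : ∑ j, ∑ i, mip (A i) (U * S j * Δᵀ) ^ 2
        ≤ (m:ℝ) * (1 + δ) * (∑ j, frob (U * S j * Δᵀ) ^ 2) := by
      rw [Finset.mul_sum]
      refine Finset.sum_le_sum fun j _ => ?_
      calc ∑ i, mip (A i) (U * S j * Δᵀ) ^ 2 ≤ (m:ℝ) * ((1 + δ) * frob (U * S j * Δᵀ) ^ 2) :=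
        hMu j
        _ = (m:ℝ) * (1 + δ) * frob (U * S j * Δᵀ) ^ 2 := by ring
    calc (m:ℝ) * (1 - δ) * frob E ^ 2 = (m:ℝ) * ((1 - δ) * frob E ^ 2) := by ring
      _ ≤ ∑ i, mip (A i) E ^ 2 := hEl
      _ ≤ 2 * (∑ j, ∑ i, mip (A i) (U * S j * Δᵀ) ^ 2) + ∑ i, w i * mip (A i) E := hmaster
      _ ≤ 2 * ((m:ℝ) * (1 + δ)) * (∑ j, frob (U * S j * Δᵀ) ^ 2)
            + 2 * σw * Real.sqrt (Real.log n) * (Real.sqrt ((m:ℝ) * (1 + δ)) * frob E) :=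
          add_le_add (by linarith) hnoise
  -- final algebra
  set a : ℝ := frob E with hadef
  set SF : ℝ := ∑ j, frob (U * S j * Δᵀ) ^ 2 with hSFdef
  set sL : ℝ := Real.sqrt (Real.log n) with hsLdef
  set sq : ℝ := Real.sqrt ((m:ℝ) * (1 + δ)) with hsqdef
  have hsq2 : sq ^ 2 = (m:ℝ) * (1 + δ) := Real.sq_sqrt hDpos.le
  have hsL2 : sL ^ 2 = Real.log n := Real.sq_sqrt hL
  have ha : 0 ≤ a := frob_nonneg E
  have hsLnn : 0 ≤ sL := Real.sqrt_nonneg _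
  have hkey2 : 20 * σw * sL * sq * a ≤ ((m:ℝ) * (1 + δ)) * a ^ 2 + 100 * σw ^ 2 * Real.log n := by
    nlinarith [sq_nonneg (sq * a - 10 * σw * sL), hsq2, hsL2]
  have P : 10 * ((m:ℝ) * (1 - δ)) * a ^ 2 ≤
      20 * ((m:ℝ) * (1 + δ)) * SF + ((m:ℝ) * (1 + δ)) * a ^ 2 + 200 * Real.log n * σw ^ 2 := by
    nlinarith [hG, hkey2, mul_nonneg (mul_nonneg (by norm_num : (0:ℝ) ≤ 100) (sq_nonneg σw)) hL]
  have e1 : ((1 - δ) / (2 * (1 + δ))) * a ^ 2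
      = (10 * ((m:ℝ) * (1 - δ)) * a ^ 2) / (20 * ((m:ℝ) * (1 + δ))) := by
    rw [div_mul_eq_mul_div]
    rw [div_eq_div_iff (by positivity) (by positivity)]
    ring
  have e2 : SF + (1 / 20) * a ^ 2 + 10 * Real.log n * σw ^ 2 / ((m:ℝ) * (1 + δ))
      = (20 * ((m:ℝ) * (1 + δ)) * SF + ((m:ℝ) * (1 + δ)) * a ^ 2 + 200 * Real.log n * σw ^ 2)
        / (20 * ((m:ℝ) * (1 + δ))) := by
    field_simp
    ring
  calc ((1 - δ) / (2 * (1 + δ))) * a ^ 2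
      = (10 * ((m:ℝ) * (1 - δ)) * a ^ 2) / (20 * ((m:ℝ) * (1 + δ))) := e1
    _ ≤ (20 * ((m:ℝ) * (1 + δ)) * SF + ((m:ℝ) * (1 + δ)) * a ^ 2
          + 200 * Real.log n * σw ^ 2) / (20 * ((m:ℝ) * (1 + δ))) := by
        gcongr
    _ = SF + (1 / 20) * a ^ 2 + 10 * Real.log n * σw ^ 2 / ((m:ℝ) * (1 + δ)) := e2.symm
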